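/- Let T be a Rota-Baxter operator of weight α on a Gel'fand-Dorfman bialgebra (V, [·,·], ∘) (i.e. T is simultaneously a Rota-Baxter operator of weight α on the Lie algebra (V,[·,·]) and on the Novikov algebra (V,∘)). Then the C[∂]-linear extension T̃: C[∂]V → C[∂]V of T is a Rota-Baxter operator of weight α on the quadratic Lie conformal algebra R = C[∂]V with [a_λ b] = ∂(b∘a) + λ(a∘b + b∘a) + [b,a] for a, b ∈ V. -/

import Mathlib

open Finsupp

noncomputable section

/-- Coefficient of `λ^k` of the substitution `μ ↦ -λ-∂` applied to the polynomial
`Σₙ μ^n • (f n)` with coefficients in `A` (with `∂` acting on the coefficients). -/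
def csubst {A : Type} [AddCommGroup A] [Module ℂ A]
    (D : Module.End ℂ A) (f : ℕ →₀ A) (k : ℕ) : A :=
  f.sum fun n c => ((-1 : ℂ) ^ n * (n.choose k : ℂ)) • (D ^ (n - k)) c

/-- Coefficient of `λ^n μ^m` of `(a_λ b)_{λ+μ} c`, for a λ-product `m₁` on `A`
and a λ-action `m₂` of `A` on `V`. -/
def comp2 {A V : Type} [AddCommGroup A] [Module ℂ A] [AddCommGroup V] [Module ℂ V]
    (m₁ : A →ₗ[ℂ] A →ₗ[ℂ] (ℕ →₀ A)) (m₂ : A →ₗ[ℂ] V →ₗ[ℂ] (ℕ →₀ V))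
    (a b : A) (c : V) (n m : ℕ) : V :=
  ∑ i ∈ Finset.range (n + 1),
    (((m + n - i).choose (n - i) : ℕ) : ℂ) • m₂ (m₁ a b i) c (m + n - i)

/-- A conformal algebra: a `ℂ[∂]`-module with a sesquilinear λ-product,
encoded coefficientwise: `mul a b n` is the coefficient of `λ^n` in `a_λ b`. -/
structure ConfAlg (A : Type) [AddCommGroup A] [Module ℂ A] where
  D : Module.End ℂ A
  mul : A →ₗ[ℂ] A →ₗ[ℂ] (ℕ →₀ A)
  sesq_left_zero : ∀ a b, mul (D a) b 0 = 0
  sesq_left : ∀ a b n, mul (D a) b (n + 1) = - mul a b n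
  sesq_right_zero : ∀ a b, mul a (D b) 0 = D (mul a b 0)
  sesq_right : ∀ a b n, mul a (D b) (n + 1) = D (mul a b (n + 1)) + mul a b n

/-- A Lie conformal algebra: skew-symmetry `[a_λ b] = -[b_{-λ-∂} a]` and the
Jacobi identity `[a_λ[b_μ c]] = [[a_λ b]_{λ+μ} c] + [b_μ[a_λ c]]`, coefficientwise. -/
structure LieConfAlg (A : Type) [AddCommGroup A] [Module ℂ A] extends ConfAlg A where
  skew : ∀ a b k, mul a b k = - csubst D (mul b a) k
  jacobi : ∀ a b c n m,
    mul a (mul b c m) n = comp2 mul mul a b c n m + mul b (mul a c n) m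

/-- A left-symmetric conformal algebra:
`(a_λ b)_{λ+μ} c - a_λ(b_μ c) = (b_μ a)_{λ+μ} c - b_μ(a_λ c)`, coefficientwise. -/
structure LSConfAlg (A : Type) [AddCommGroup A] [Module ℂ A] extends ConfAlg A where
  lsym : ∀ a b c n m,
    comp2 mul mul a b c n m - mul a (mul b c m) n
      = comp2 mul mul b a c m n - mul b (mul a c n) m

/-- a Rota-Baxter operator of weight `α` on a Gel'fand-Dorfman
bialgebra extends `ℂ[∂]`-linearly to a Rota-Baxter operator of weight `α` on the
corresponding quadratic Lie conformal algebra `R = ℂ[∂]V`. -/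
theorem rota_baxter_extension_quadratic
    {V : Type} [LieRing V] [LieAlgebra ℂ V]
    (nov : V →ₗ[ℂ] V →ₗ[ℂ] V)
    (hnov1 : ∀ a b c : V, nov (nov a b) c = nov (nov a c) b)
    (hnov2 : ∀ a b c : V,
      nov (nov a b) c - nov a (nov b c) = nov (nov b a) c - nov b (nov a c))
    (hcompat : ∀ a b c : V,
      ⁅nov a b, c⁆ + nov ⁅a, b⁆ c - nov a ⁅b, c⁆ - ⁅nov a c, b⁆ - nov ⁅a, c⁆ b = 0)
    (L : LieConfAlg (ℕ →₀ V))
    (hD : ∀ (n : ℕ) (v : V), L.D (Finsupp.single n v) = Finsupp.single (n + 1) v)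
    (hmul0 : ∀ a b : V, L.mul (Finsupp.single 0 a) (Finsupp.single 0 b) 0
        = Finsupp.single 1 (nov b a) + Finsupp.single 0 ⁅b, a⁆)
    (hmul1 : ∀ a b : V, L.mul (Finsupp.single 0 a) (Finsupp.single 0 b) 1
        = Finsupp.single 0 (nov a b + nov b a))
    (hmul2 : ∀ (a b : V) (n : ℕ),
        L.mul (Finsupp.single 0 a) (Finsupp.single 0 b) (n + 2) = 0)
    (α : ℂ) (t : V →ₗ[ℂ] V)
    (hRBlie : ∀ a b : V, ⁅t a, t b⁆ = t ⁅t a, b⁆ + t ⁅a, t b⁆ + α • t ⁅a, b⁆)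
    (hRBnov : ∀ a b : V, nov (t a) (t b)
        = t (nov (t a) b) + t (nov a (t b)) + α • t (nov a b))
    (T : (ℕ →₀ V) →ₗ[ℂ] (ℕ →₀ V))
    (hT : ∀ (n : ℕ) (v : V), T (Finsupp.single n v) = Finsupp.single n (t v)) :
    (∀ p, T (L.D p) = L.D (T p)) ∧
      ∀ a b k, L.mul (T a) (T b) k
        = T (L.mul a (T b) k) + T (L.mul (T a) b k) + α • T (L.mul a b k) := by
  have hTD : ∀ p, T (L.D p) = L.D (T p) := by
    intro p
    induction p using Finsupp.induction_linear with
    | zero => simp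
    | add f g hf hg => simp only [map_add, hf, hg]
    | single n v => rw [hD, hT, hT, hD]
  refine ⟨hTD, ?_⟩
  set Q : (ℕ →₀ V) → (ℕ →₀ V) → Prop := fun a b => ∀ k, L.mul (T a) (T b) k
      = T (L.mul a (T b) k) + T (L.mul (T a) b k) + α • T (L.mul a b k) with hQ
  -- D-stability on the left
  have QDl : ∀ a b, Q a b → Q (L.D a) b := by
    intro a b h k
    rcases k with _ | k
    · rw [hTD]
      simp [L.sesq_left_zero]
    · rw [hTD]
      simp only [L.sesq_left, map_neg, smul_neg, h k]
      abel
  -- D-stability on the right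
  have QDr : ∀ a b, Q a b → Q a (L.D b) := by
    intro a b h k
    have e1 : ∀ j, L.mul a (T (L.D b)) j = L.mul a (L.D (T b)) j := by
      intro j; rw [hTD]
    have e0 : ∀ j, L.mul (T a) (T (L.D b)) j = L.mul (T a) (L.D (T b)) j := by
      intro j; rw [hTD]
    rcases k with _ | k
    · rw [e0, L.sesq_right_zero, h 0, e1, L.sesq_right_zero, L.sesq_right_zero,
        L.sesq_right_zero]
      simp only [map_add, map_smul, hTD]
    · rw [e0, L.sesq_right, h (k + 1), h k, e1, L.sesq_right, L.sesq_right,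
        L.sesq_right]
      simp only [map_add, map_smul, smul_add, hTD]
      abel
  -- base case on singles of degree 0
  have Q00 : ∀ x y : V, Q (Finsupp.single 0 x) (Finsupp.single 0 y) := by
    intro x y k
    rw [hT, hT]
    rcases k with _ | _ | k
    · rw [hmul0, hmul0, hmul0, hmul0]
      simp only [hRBnov y x, hRBlie y x, map_add, hT, Finsupp.single_add,
        smul_add, Finsupp.smul_single, map_smul]
      abel
    · rw [hmul1, hmul1, hmul1, hmul1]
      simp only [hRBnov x y, hRBnov y x, map_add, hT, Finsupp.single_add,
        smul_add, Finsupp.smul_single, map_smul]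
      abel
    · rw [hmul2, hmul2, hmul2, hmul2]
      simp
  -- zero / additivity
  have Q0l : ∀ b, Q 0 b := by intro b k; simp
  have Q0r : ∀ a, Q a 0 := by intro a k; simp
  have Qaddl : ∀ a a' b, Q a b → Q a' b → Q (a + a') b := by
    intro a a' b h h' k
    simp only [map_add, LinearMap.add_apply, Finsupp.add_apply, smul_add,
      h k, h' k]
    abel
  have Qaddr : ∀ a b b', Q a b → Q a b' → Q a (b + b') := by
    intro a b b' h h' k
    simp only [map_add, LinearMap.add_apply, Finsupp.add_apply, smul_add,
      h k, h' k]
    abel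
  -- iterate D
  have hpow : ∀ (n : ℕ) (p : ℕ →₀ V),
      (L.D ^ (n + 1)) p = L.D ((L.D ^ n) p) := by
    intro n p
    rw [pow_succ', Module.End.mul_apply]
  have QDln : ∀ (n : ℕ) a b, Q a b → Q ((L.D ^ n) a) b := by
    intro n
    induction n with
    | zero => intro a b h; simpa using h
    | succ n ih =>
        intro a b h
        rw [hpow]
        exact QDl _ _ (ih a b h)
  have QDrn : ∀ (m : ℕ) a b, Q a b → Q a ((L.D ^ m) b) := by
    intro m
    induction m with
    | zero => intro a b h; simpa using h
    | succ m ih =>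
        intro a b h
        rw [hpow]
        exact QDr _ _ (ih a b h)
  have hsing : ∀ (n : ℕ) (v : V),
      Finsupp.single n v = (L.D ^ n) (Finsupp.single 0 v) := by
    intro n
    induction n with
    | zero => intro v; simp
    | succ n ih =>
        intro v
        rw [hpow, ← ih, hD]
  intro a b
  induction a using Finsupp.induction_linear with
  | zero => exact Q0l b
  | add f g hf hg => exact Qaddl _ _ _ hf hg
  | single n v =>
      induction b using Finsupp.induction_linear with
      | zero => exact Q0r _
      | add f g hf hg => exact Qaddr _ _ _ hf hg
      | single m w =>
          rw [hsing n v, hsing m w]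
          exact QDln n _ _ (QDrn m _ _ (Q00 v w))
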